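/- Let y₁,…,yₙ ∈ ℝ with positive weights w₁,…,wₙ, and suppose the full index set [n] is a maximizer of the weighted average over all suffix sets (upper sets) S_l = {l, l+1, …, n}, i.e., Avg([n]) ≥ Avg(S_l) for every 1 ≤ l ≤ n. Then the constrained minimization of Σᵢ wᵢ(g(i) − yᵢ)² over nondecreasing g with p̲ ≤ g ≤ p̄ is solved by the constant function g ≡ max(p̲, min(p̄, Avg([n]))). -/

import Mathlib

lemma iio_sum_aux {n : ℕ} (l : Fin n) (fn : ℕ → ℝ) :
    ∑ i ∈ Finset.Iio l, fn i.val = ∑ k ∈ Finset.range l.val, fn k := by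
  rw [← Nat.Iio_eq_range, ← Fin.map_valEmbedding_Iio, Finset.sum_map]
  rfl

/-- If the full index set is a maximizer of the weighted average over all
suffix (upper) sets, then the bounded isotonic least-squares problem is solved
by the constant function equal to the weighted average clipped to `[p̲, p̄]`. -/
theorem stmt6 (n : ℕ) (hn : 0 < n) (w y : Fin n → ℝ) (hw : ∀ i, 0 < w i)
    (Avg : Finset (Fin n) → ℝ)
    (hAvg : ∀ S, Avg S = (∑ i ∈ S, w i * y i) / (∑ i ∈ S, w i))
    (hmax : ∀ l : Fin n, Avg (Finset.Ici l) ≤ Avg Finset.univ)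
    (lo hi : ℝ) (hlh : lo ≤ hi) :
    ∀ g : Fin n → ℝ, Monotone g → (∀ i, lo ≤ g i ∧ g i ≤ hi) →
      ∑ i, w i * (max lo (min hi (Avg Finset.univ)) - y i) ^ 2 ≤
        ∑ i, w i * (g i - y i) ^ 2 := by
  intro g hg hbd
  haveI : Nonempty (Fin n) := ⟨⟨0, hn⟩⟩
  set μ := Avg Finset.univ with hμdef
  set c := max lo (min hi μ) with hcdef
  have hn1 : n - 1 < n := Nat.sub_lt hn one_pos
  set wn : ℕ → ℝ := fun k => if h : k < n then w ⟨k, h⟩ else 0 with hwndef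
  set zn : ℕ → ℝ := fun k => if h : k < n then w ⟨k, h⟩ * y ⟨k, h⟩ else 0 with hzndef
  set a : ℕ → ℝ := fun k => c * wn k - zn k with hadef
  set F : ℕ → ℝ :=
    fun k => g ⟨min k (n - 1), lt_of_le_of_lt (min_le_right _ _) hn1⟩ - c with hFdef
  -- basic facts about wn
  have hwn_nonneg : ∀ k, 0 ≤ wn k := by
    intro k
    rw [hwndef]
    dsimp only
    split
    · exact le_of_lt (hw _)
    · exact le_rfl
  have hWmono : ∀ k m : ℕ, k ≤ m →
      ∑ j ∈ Finset.range k, wn j ≤ ∑ j ∈ Finset.range m, wn j := by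
    intro k m hkm
    exact Finset.sum_le_sum_of_subset_of_nonneg (Finset.range_subset_range.2 hkm)
      (fun j _ _ => hwn_nonneg j)
  have hWnonneg : ∀ k, 0 ≤ ∑ j ∈ Finset.range k, wn j :=
    fun k => Finset.sum_nonneg fun j _ => hwn_nonneg j
  -- bridges between Fin sums and range sums
  have hWuniv : ∑ i : Fin n, w i = ∑ k ∈ Finset.range n, wn k := by
    rw [← Fin.sum_univ_eq_sum_range wn n]
    exact Finset.sum_congr rfl fun i _ => by simp [hwndef]
  have hZuniv : ∑ i : Fin n, w i * y i = ∑ k ∈ Finset.range n, zn k := by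
    rw [← Fin.sum_univ_eq_sum_range zn n]
    exact Finset.sum_congr rfl fun i _ => by simp [hzndef]
  have hWpos : 0 < ∑ k ∈ Finset.range n, wn k := by
    rw [← hWuniv]
    exact Finset.sum_pos (fun i _ => hw i) Finset.univ_nonempty
  -- total: Z n = μ * W n
  have hZn : ∑ k ∈ Finset.range n, zn k = μ * ∑ k ∈ Finset.range n, wn k := by
    have h := hAvg Finset.univ
    rw [← hμdef, hWuniv, hZuniv] at h
    rw [h, div_mul_cancel₀]
    exact ne_of_gt hWpos
  -- prefix bound from the suffix-average hypothesis
  have hZk : ∀ k : ℕ, k < n →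
      μ * ∑ j ∈ Finset.range k, wn j ≤ ∑ j ∈ Finset.range k, zn j := by
    intro k hk
    set l : Fin n := ⟨k, hk⟩ with hldef
    have hcompl : (Finset.Ici l)ᶜ = Finset.Iio l := by
      ext i; simp [not_le]
    have hsplitW : ∑ i ∈ Finset.Iio l, w i + ∑ i ∈ Finset.Ici l, w i
        = ∑ i : Fin n, w i := by
      rw [← hcompl]
      exact Finset.sum_compl_add_sum _ _
    have hsplitZ : ∑ i ∈ Finset.Iio l, (w i * y i) + ∑ i ∈ Finset.Ici l, (w i * y i)
        = ∑ i : Fin n, w i * y i := by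
      rw [← hcompl]
      exact Finset.sum_compl_add_sum _ _
    have hIW : ∑ i ∈ Finset.Iio l, w i = ∑ j ∈ Finset.range k, wn j := by
      rw [← iio_sum_aux l wn]
      exact Finset.sum_congr rfl fun i _ => by simp [hwndef]
    have hIZ : ∑ i ∈ Finset.Iio l, (w i * y i) = ∑ j ∈ Finset.range k, zn j := by
      rw [← iio_sum_aux l zn]
      exact Finset.sum_congr rfl fun i _ => by simp [hzndef]
    have hSWpos : 0 < ∑ i ∈ Finset.Ici l, w i :=
      Finset.sum_pos (fun i _ => hw i) ⟨l, Finset.mem_Ici.2 le_rfl⟩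
    have hm := hmax l
    rw [hAvg (Finset.Ici l), div_le_iff₀ hSWpos] at hm
    have e1 : ∑ i ∈ Finset.Ici l, w i
        = ∑ j ∈ Finset.range n, wn j - ∑ j ∈ Finset.range k, wn j := by
      rw [← hIW, ← hWuniv]; linarith [hsplitW]
    have e2 : ∑ i ∈ Finset.Ici l, (w i * y i)
        = ∑ j ∈ Finset.range n, zn j - ∑ j ∈ Finset.range k, zn j := by
      rw [← hIZ, ← hZuniv]; linarith [hsplitZ]
    rw [e1, e2] at hm
    nlinarith [hm, hZn]
  -- prefix sums of a
  have hPform : ∀ k : ℕ, ∑ j ∈ Finset.range k, a j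
      = c * ∑ j ∈ Finset.range k, wn j - ∑ j ∈ Finset.range k, zn j := by
    intro k
    rw [hadef, Finset.sum_sub_distrib, Finset.mul_sum]
  have hPle : ∀ k : ℕ, k ≤ n →
      ∑ j ∈ Finset.range k, a j ≤ (c - μ) * ∑ j ∈ Finset.range k, wn j := by
    intro k hk
    rcases lt_or_eq_of_le hk with hk | hk
    · have := hZk k hk
      rw [hPform k]; nlinarith
    · subst hk
      rw [hPform k, hZn]; ring_nf; exact le_rfl
  have hPn : ∑ j ∈ Finset.range n, a j = (c - μ) * ∑ j ∈ Finset.range n, wn j := by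
    rw [hPform n, hZn]; ring
  -- F is monotone
  have hFmono : Monotone F := by
    intro j k hjk
    rw [hFdef]
    dsimp only
    refine sub_le_sub_right (hg ?_) c
    exact Fin.mk_le_mk.2 (min_le_min hjk le_rfl)
  -- values of F and a inside range
  have hFval : ∀ i : Fin n, F i.val = g i - c := by
    intro i
    rw [hFdef]
    dsimp only
    congr 2
    exact Fin.ext (min_eq_left (Nat.le_sub_one_of_lt i.isLt))
  have hFbd : ∀ k, lo - c ≤ F k ∧ F k ≤ hi - c := by
    intro k
    rw [hFdef]; dsimp only
    constructor
    · exact sub_le_sub_right (hbd _).1 c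
    · exact sub_le_sub_right (hbd _).2 c
  -- Abel summation
  have byparts := Finset.sum_range_by_parts F a n
  simp only [smul_eq_mul] at byparts
  -- key inequality
  have key : 0 ≤ ∑ k ∈ Finset.range n, F k * a k := by
    rcases lt_or_ge μ lo with hcase | hcase
    · -- c = lo, μ < c
      have hc : c = lo := by
        rw [hcdef, min_eq_right (le_of_lt (lt_of_lt_of_le hcase hlh)),
          max_eq_left (le_of_lt hcase)]
      have hμc : μ < c := by rw [hc]; exact hcase
      have hterm : ∀ i ∈ Finset.range (n - 1),
          (F (i + 1) - F i) * (∑ j ∈ Finset.range (i + 1), a j) ≤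
          (F (i + 1) - F i) * ((c - μ) * ∑ j ∈ Finset.range n, wn j) := by
        intro i hi
        have hdF : 0 ≤ F (i + 1) - F i := sub_nonneg.2 (hFmono (Nat.le_succ i))
        apply mul_le_mul_of_nonneg_left _ hdF
        have h1 : i + 1 ≤ n := le_trans (Finset.mem_range.1 hi) (Nat.sub_le n 1)
        calc ∑ j ∈ Finset.range (i + 1), a j
            ≤ (c - μ) * ∑ j ∈ Finset.range (i + 1), wn j := hPle _ h1
          _ ≤ (c - μ) * ∑ j ∈ Finset.range n, wn j :=
              mul_le_mul_of_nonneg_left (hWmono _ _ h1) (le_of_lt (sub_pos.2 hμc))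
      have hsum := Finset.sum_le_sum hterm
      rw [← Finset.sum_mul, Finset.sum_range_sub F (n - 1)] at hsum
      have hF0 : 0 ≤ F 0 := by
        have := (hFbd 0).1; rw [hc] at this; linarith
      have hPn0 : 0 ≤ (c - μ) * ∑ j ∈ Finset.range n, wn j :=
        mul_nonneg (le_of_lt (sub_pos.2 hμc)) (hWnonneg n)
      have hident : F (n - 1) * ((c - μ) * ∑ j ∈ Finset.range n, wn j)
          - (F (n - 1) - F 0) * ((c - μ) * ∑ j ∈ Finset.range n, wn j)
          = F 0 * ((c - μ) * ∑ j ∈ Finset.range n, wn j) := by ring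
      rw [byparts, hPn]
      nlinarith [mul_nonneg hF0 hPn0]
    · -- lo ≤ μ : c ≤ μ and F (n-1) * P n ≥ 0
      have hcμ : c ≤ μ ∧ 0 ≤ F (n - 1) * ((c - μ) * ∑ j ∈ Finset.range n, wn j) := by
        rcases le_or_gt μ hi with hμhi | hμhi
        · have hc : c = μ := by
            rw [hcdef, min_eq_right hμhi, max_eq_right hcase]
          constructor
          · rw [hc]
          · rw [hc]; simp
        · have hc : c = hi := by
            rw [hcdef, min_eq_left (le_of_lt hμhi), max_eq_right hlh]
          constructor
          · rw [hc]; exact le_of_lt hμhi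
          · have h1 : F (n - 1) ≤ 0 := by
              have := (hFbd (n - 1)).2; rw [hc] at this; linarith
            have h2 : (c - μ) * ∑ j ∈ Finset.range n, wn j ≤ 0 := by
              apply mul_nonpos_of_nonpos_of_nonneg
              · rw [hc]; linarith
              · exact hWnonneg n
            nlinarith
      have htermneg : ∀ i ∈ Finset.range (n - 1),
          (F (i + 1) - F i) * (∑ j ∈ Finset.range (i + 1), a j) ≤ 0 := by
        intro i hi
        have hdF : 0 ≤ F (i + 1) - F i := sub_nonneg.2 (hFmono (Nat.le_succ i))
        apply mul_nonpos_of_nonneg_of_nonpos hdF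
        have h1 : i + 1 ≤ n := le_trans (Finset.mem_range.1 hi) (Nat.sub_le n 1)
        calc ∑ j ∈ Finset.range (i + 1), a j
            ≤ (c - μ) * ∑ j ∈ Finset.range (i + 1), wn j := hPle _ h1
          _ ≤ 0 := mul_nonpos_of_nonpos_of_nonneg (by linarith [hcμ.1]) (hWnonneg _)
      have hsum : ∑ i ∈ Finset.range (n - 1),
          (F (i + 1) - F i) * (∑ j ∈ Finset.range (i + 1), a j) ≤ 0 :=
        Finset.sum_nonpos htermneg
      rw [byparts, hPn]
      linarith [hcμ.2]
  -- transfer key to the Fin sum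
  have key' : 0 ≤ ∑ i : Fin n, (g i - c) * (w i * (c - y i)) := by
    rw [← Fin.sum_univ_eq_sum_range (fun k => F k * a k) n] at key
    calc (0:ℝ) ≤ ∑ i : Fin n, F i.val * a i.val := key
      _ = ∑ i : Fin n, (g i - c) * (w i * (c - y i)) := by
          apply Finset.sum_congr rfl
          intro i _
          rw [hFval i, hadef]
          simp only [hwndef, hzndef, i.isLt, dif_pos, Fin.eta]
          ring
  -- final expansion
  have expand : ∀ i : Fin n, w i * (g i - y i) ^ 2
      = w i * (c - y i) ^ 2 + w i * (g i - c) ^ 2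
        + 2 * ((g i - c) * (w i * (c - y i))) := fun i => by ring
  have hsq : 0 ≤ ∑ i : Fin n, w i * (g i - c) ^ 2 :=
    Finset.sum_nonneg fun i _ => mul_nonneg (le_of_lt (hw i)) (sq_nonneg _)
  calc ∑ i : Fin n, w i * (c - y i) ^ 2
      ≤ ∑ i : Fin n, (w i * (c - y i) ^ 2 + w i * (g i - c) ^ 2
          + 2 * ((g i - c) * (w i * (c - y i)))) := by
        rw [Finset.sum_add_distrib, Finset.sum_add_distrib, ← Finset.mul_sum]
        linarith
    _ = ∑ i : Fin n, w i * (g i - y i) ^ 2 :=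
        Finset.sum_congr rfl fun i _ => (expand i).symm
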